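/- Let K be a global function field of characteristic p, R a coordinate ring of K, 𝔸 = FiniteAdeleRing R K, and J = 𝔸ˣ its idele group with the units topology. Then the set of p-th powers {y^p : y ∈ J} is a closed subset of J. -/

import Mathlib

open IsDedekindDomain

open Filter Set IsDedekindDomain.HeightOneSpectrum
open scoped Multiplicative WithZero

set_option maxHeartbeats 1000000
set_option synthInstance.maxHeartbeats 400000

section Aux

variable {R K : Type} [CommRing R] [IsDedekindDomain R] [Field K] [Algebra R K]
  [IsFractionRing R K]

/-- Evaluation at a place, as a ring hom. -/
def adeleEvalHom (v : HeightOneSpectrum R) :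
    FiniteAdeleRing R K →+* v.adicCompletion K where
  toFun a := a v
  map_one' := rfl
  map_mul' _ _ := rfl
  map_zero' := rfl
  map_add' _ _ := rfl

lemma continuous_adeleEvalHom (v : HeightOneSpectrum R) :
    Continuous (adeleEvalHom (K := K) v) := by
  exact RestrictedProduct.continuous_eval v

lemma isClosed_pPow (p : ℕ) (hp : p.Prime) [CharP K p] (v : HeightOneSpectrum R) :
    IsClosed {c : v.adicCompletion K | ∃ d, d ^ p = c} := by
  haveI : Fact p.Prime := ⟨hp⟩
  haveI : CharP (v.adicCompletion K) p :=
    charP_of_injective_algebraMap (algebraMap K (v.adicCompletion K)).injective p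
  have hui : IsUniformInducing (fun d : v.adicCompletion K => d ^ p) := by
    constructor
    refine Filter.HasBasis.ext
      ((Valued.hasBasis_uniformity (v.adicCompletion K) ℤᵐ⁰).comap
        (fun x : (v.adicCompletion K) × (v.adicCompletion K) => (x.1 ^ p, x.2 ^ p)))
      (Valued.hasBasis_uniformity (v.adicCompletion K) ℤᵐ⁰) ?_ ?_
    · -- for each γ, find δ with plain entourage δ ⊆ preimage entourage γ
      intro γ _
      refine ⟨if h : (γ : (MonoidWithZeroHom.ValueGroup₀ (MonoidWithZeroHom.ofClass (Valued.v : Valuation (v.adicCompletion K) ℤᵐ⁰)))) ≤ 1 then γ else 1, trivial, ?_⟩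
      intro x hx
      simp only [Set.mem_setOf_eq, Set.mem_preimage] at hx ⊢
      have hsub : x.2 ^ p - x.1 ^ p = (x.2 - x.1) ^ p := (sub_pow_expChar _ _).symm
      rw [hsub, Valuation.map_pow]
      set t := Valued.v.restrict (x.2 - x.1) with ht
      have hδ1 : ((if h : (γ : (MonoidWithZeroHom.ValueGroup₀ (MonoidWithZeroHom.ofClass (Valued.v : Valuation (v.adicCompletion K) ℤᵐ⁰)))) ≤ 1 then γ else 1 : (MonoidWithZeroHom.ValueGroup₀ (MonoidWithZeroHom.ofClass (Valued.v : Valuation (v.adicCompletion K) ℤᵐ⁰)))ˣ) : (MonoidWithZeroHom.ValueGroup₀ (MonoidWithZeroHom.ofClass (Valued.v : Valuation (v.adicCompletion K) ℤᵐ⁰)))) ≤ 1 ∧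
          ((if h : (γ : (MonoidWithZeroHom.ValueGroup₀ (MonoidWithZeroHom.ofClass (Valued.v : Valuation (v.adicCompletion K) ℤᵐ⁰)))) ≤ 1 then γ else 1 : (MonoidWithZeroHom.ValueGroup₀ (MonoidWithZeroHom.ofClass (Valued.v : Valuation (v.adicCompletion K) ℤᵐ⁰)))ˣ) : (MonoidWithZeroHom.ValueGroup₀ (MonoidWithZeroHom.ofClass (Valued.v : Valuation (v.adicCompletion K) ℤᵐ⁰)))) ≤ (γ : (MonoidWithZeroHom.ValueGroup₀ (MonoidWithZeroHom.ofClass (Valued.v : Valuation (v.adicCompletion K) ℤᵐ⁰)))) := by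
        split_ifs with h
        · exact ⟨h, le_rfl⟩
        · exact ⟨le_rfl, le_of_not_ge h⟩
      have htlt : t < ((if h : (γ : (MonoidWithZeroHom.ValueGroup₀ (MonoidWithZeroHom.ofClass (Valued.v : Valuation (v.adicCompletion K) ℤᵐ⁰)))) ≤ 1 then γ else 1 : (MonoidWithZeroHom.ValueGroup₀ (MonoidWithZeroHom.ofClass (Valued.v : Valuation (v.adicCompletion K) ℤᵐ⁰)))ˣ) : (MonoidWithZeroHom.ValueGroup₀ (MonoidWithZeroHom.ofClass (Valued.v : Valuation (v.adicCompletion K) ℤᵐ⁰)))) := hx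
      have ht1 : t ≤ 1 := le_of_lt (lt_of_lt_of_le htlt hδ1.1)
      have hpow : t ^ p ≤ t := by
        calc t ^ p ≤ t ^ 1 := pow_le_pow_right_of_le_one' ht1 hp.one_lt.le
        _ = t := pow_one t
      exact lt_of_le_of_lt hpow (lt_of_lt_of_le htlt hδ1.2)
    · -- for each δ, preimage entourage (δ^p) ⊆ plain entourage δ
      intro δ _
      refine ⟨δ ^ p, trivial, ?_⟩
      intro x hx
      simp only [Set.mem_setOf_eq, Set.mem_preimage] at hx ⊢
      have hsub : x.2 ^ p - x.1 ^ p = (x.2 - x.1) ^ p := (sub_pow_expChar _ _).symm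
      rw [hsub, Valuation.map_pow, Units.val_pow_eq_pow_val] at hx
      by_contra hc
      exact absurd hx (not_lt.mpr (pow_le_pow_left' (not_lt.mp hc) p))
  have hrange : {c : v.adicCompletion K | ∃ d, d ^ p = c}
      = Set.range (fun d : v.adicCompletion K => d ^ p) := rfl
  rw [hrange]
  exact hui.isComplete_range.isClosed

end Aux


/-- Let `K` be a global function field of characteristic `p`, `R` a coordinate ring of `K`, and
`J = 𝔸ˣ` the idele group of `K` (units of the finite adele ring, with the units topology).
Then the set of `p`-th powers in `J` is closed. -/
theorem isClosed_pow_p_ideles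
    (p : ℕ) (hp : p.Prime)
    (Fq K : Type) [Field Fq] [Fintype Fq] [Field K]
    [Algebra (RatFunc Fq) K] [FunctionField Fq K] [CharP K p]
    (R : Type) [CommRing R] [IsDedekindDomain R] [Algebra R K] [IsFractionRing R K]
    [Algebra Fq R] [Algebra Fq K] [IsScalarTower Fq R K] [Algebra.FiniteType Fq R] :
    IsClosed {x : (FiniteAdeleRing R K)ˣ | ∃ y : (FiniteAdeleRing R K)ˣ, y ^ p = x} := by
  haveI : Fact p.Prime := ⟨hp⟩
  set T : Set (FiniteAdeleRing R K) :=
    {a | ∀ v : HeightOneSpectrum R, ∃ d : v.adicCompletion K,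
      d ^ p = adeleEvalHom (K := K) v a} with hT
  have hTclosed : IsClosed T := by
    have : T = ⋂ v : HeightOneSpectrum R,
        adeleEvalHom (K := K) v ⁻¹' {c : v.adicCompletion K | ∃ d, d ^ p = c} := by
      ext a
      simp only [hT, Set.mem_setOf_eq, Set.mem_iInter, Set.mem_preimage]
    rw [this]
    exact isClosed_iInter fun v =>
      (isClosed_pPow p hp v).preimage (continuous_adeleEvalHom v)
  have hset : {x : (FiniteAdeleRing R K)ˣ | ∃ y : (FiniteAdeleRing R K)ˣ, y ^ p = x}
      = Units.val ⁻¹' T := by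
    ext x
    simp only [Set.mem_setOf_eq, Set.mem_preimage, hT]
    constructor
    · rintro ⟨y, rfl⟩ v
      exact ⟨adeleEvalHom (K := K) v (y : FiniteAdeleRing R K), by
        rw [← map_pow, ← Units.val_pow_eq_pow_val]⟩
    · intro h
      choose d hd using h
      have hb : ∀ᶠ v in Filter.cofinite, d v ∈ v.adicCompletionIntegers K := by
        apply Filter.Eventually.mono (x : FiniteAdeleRing R K).2
        intro v hv
        replace hv : Valued.v (adeleEvalHom (K := K) v x) ≤ 1 := hv
        rw [mem_adicCompletionIntegers]
        have hle : (Valued.v (d v)) ^ p ≤ 1 := by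
          rw [← Valuation.map_pow, hd v]
          exact hv
        exact (pow_le_one_iff hp.ne_zero).mp hle
      set B : FiniteAdeleRing R K := ⟨fun v => d v, hb⟩ with hB
      have hBp : B ^ p = (x : FiniteAdeleRing R K) := by
        apply FiniteAdeleRing.ext
        intro v
        have h1 : (B ^ p) v = (B v) ^ p := map_pow (adeleEvalHom (K := K) v) B p
        rw [h1]
        exact hd v
      have hU : IsUnit B := (isUnit_pow_iff hp.ne_zero).mp (hBp ▸ x.isUnit)
      obtain ⟨u, hu⟩ := hU
      exact ⟨u, Units.ext (by rw [Units.val_pow_eq_pow_val, hu, hBp])⟩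
  rw [hset]
  exact hTclosed.preimage Units.continuous_val
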